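/- Let ℓ : ℝ^d → ℝ satisfy the (θ', P)-reflection symmetry: ℓ(θ + θ') = ℓ((I−2P)θ + θ') for all θ, with Pθ' = θ'. Let ℓ_r(θ) = ℓ(θ) + γ‖θ − θ₀‖² for γ > 0 and θ₀ ∈ ℝ^d. Then for all θ: ℓ_r(θ + θ') − ℓ_r((I−2P)θ + θ') = 4γ (Pθ)ᵀ(θ' − θ₀). -/

import Mathlib

open Matrix

theorem stmt4 {d : ℕ} (ℓ : (Fin d → ℝ) → ℝ) (P : Matrix (Fin d) (Fin d) ℝ)
    (hproj : P * P = P) (hsymm : Pᵀ = P)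
    (θ' : Fin d → ℝ) (hθ' : P *ᵥ θ' = θ')
    (hsym : ∀ θ, ℓ (θ + θ') = ℓ ((1 - 2 • P) *ᵥ θ + θ'))
    (γ : ℝ) (hγ : 0 < γ) (θ₀ : Fin d → ℝ) :
    ∀ θ, (fun ψ => ℓ ψ + γ * ((ψ - θ₀) ⬝ᵥ (ψ - θ₀))) (θ + θ')
        - (fun ψ => ℓ ψ + γ * ((ψ - θ₀) ⬝ᵥ (ψ - θ₀))) ((1 - 2 • P) *ᵥ θ + θ')
        = 4 * γ * ((P *ᵥ θ) ⬝ᵥ (θ' - θ₀)) := by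
  intro θ
  simp only
  rw [hsym θ]
  have hR : (1 - 2 • P) *ᵥ θ = θ - 2 • (P *ᵥ θ) := by
    rw [sub_mulVec, one_mulVec, smul_mulVec]
  have hv : (P *ᵥ θ) ⬝ᵥ (P *ᵥ θ) = θ ⬝ᵥ (P *ᵥ θ) := by
    rw [dotProduct_mulVec, ← mulVec_transpose, hsymm, mulVec_mulVec, hproj,
      dotProduct_comm]
  rw [hR]
  set v := P *ᵥ θ with hvdef
  simp only [dotProduct_sub, sub_dotProduct, dotProduct_add, add_dotProduct,
    dotProduct_smul, smul_dotProduct, smul_eq_mul, ← Nat.cast_smul_eq_nsmul ℝ]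
  push_cast
  have c1 : θ ⬝ᵥ v = v ⬝ᵥ θ := dotProduct_comm _ _
  have c2 : θ' ⬝ᵥ v = v ⬝ᵥ θ' := dotProduct_comm _ _
  have c3 : θ₀ ⬝ᵥ v = v ⬝ᵥ θ₀ := dotProduct_comm _ _
  ring_nf
  nlinarith [hv, c1, c2, c3]
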